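/- In a symmetric algebra H, the element z = Σ_i C_i x Cⁱ is central for every x ∈ H: z h = h z for all h ∈ H. -/

import Mathlib

/-- In a symmetric algebra `H` with symmetrizing trace `τ`, basis
`(C_i)` and trace-dual basis `(Cⁱ)`, the element `z = Σ_i C_i x Cⁱ` is central for
every `x ∈ H`: `z h = h z` for all `h ∈ H`. -/
theorem symmetric_algebra_casimir_central {A H ι : Type*}
    [CommRing A] [Ring H] [Algebra A H] [Fintype ι] [DecidableEq ι]
    (τ : H →ₗ[A] A) (htr : ∀ a b : H, τ (a * b) = τ (b * a))
    (C : Module.Basis ι A H) (D : ι → H)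
    (hdual : ∀ i j, τ (C i * D j) = if i = j then 1 else 0) :
    ∀ x h : H, (∑ i, C i * x * D i) * h = h * (∑ i, C i * x * D i) := by
  classical
  -- coordinates of y in basis C are τ (y * D j)
  have coord : ∀ (y : H) (j : ι), τ (y * D j) = C.repr y j := by
    intro y j
    conv_lhs => rw [← C.sum_repr y]
    rw [Finset.sum_mul, map_sum]
    simp [smul_mul_assoc, hdual, mul_ite]
  have rep1 : ∀ y : H, y = ∑ i, τ (y * D i) • C i := by
    intro y
    simp only [coord]
    exact (C.sum_repr y).symm
  -- Gram matrices
  set T : Matrix ι ι A := Matrix.of fun i k => τ (C i * C k) with hT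
  set S : Matrix ι ι A := Matrix.of fun k j => τ (D j * D k) with hS
  have hTS : T * S = 1 := by
    ext i j
    simp only [Matrix.mul_apply, Matrix.of_apply, Matrix.one_apply, hT, hS]
    have : τ (C i * D j) = if i = j then 1 else 0 := hdual i j
    rw [← this]
    conv_rhs => rw [rep1 (D j)]
    rw [Finset.mul_sum, map_sum]
    refine Finset.sum_congr rfl fun k _ => ?_
    rw [mul_smul_comm, map_smul, smul_eq_mul, mul_comm]
  have hST : S * T = 1 := mul_eq_one_comm.mp hTS
  -- second representation: y = ∑ i, τ (C i * y) • D i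
  have rep2 : ∀ y : H, ∑ i, τ (C i * y) • D i = y := by
    let L : H →ₗ[A] H :=
      { toFun := fun y => ∑ i, τ (C i * y) • D i
        map_add' := by
          intro a b
          simp [mul_add, add_smul, Finset.sum_add_distrib]
        map_smul' := by
          intro c a
          simp [mul_smul_comm, Finset.smul_sum, smul_smul, mul_comm] }
    have hL : ∀ y, L y = ∑ i, τ (C i * y) • D i := fun y => rfl
    have : L = LinearMap.id := by
      apply Module.Basis.ext C
      intro k
      rw [hL]
      simp only [LinearMap.id_coe, id_eq]
      calc ∑ i, τ (C i * C k) • D i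
          = ∑ i, τ (C i * C k) • ∑ j, τ (D i * D j) • C j := by
            refine Finset.sum_congr rfl fun i _ => ?_
            rw [← rep1 (D i)]
        _ = ∑ j, (∑ i, τ (D i * D j) * τ (C i * C k)) • C j := by
            simp only [Finset.smul_sum, smul_smul]
            rw [Finset.sum_comm]
            refine Finset.sum_congr rfl fun j _ => ?_
            rw [Finset.sum_smul]
            refine Finset.sum_congr rfl fun i _ => ?_
            rw [mul_comm]
        _ = ∑ j, (S * T) j k • C j := by
            refine Finset.sum_congr rfl fun j _ => ?_
            simp [Matrix.mul_apply, hS, hT]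
        _ = C k := by
            rw [hST]
            simp [Matrix.one_apply, ite_smul]
    intro y
    have h2 := LinearMap.ext_iff.mp this y
    rw [hL] at h2
    simpa using h2
  intro x h
  have lhs_eq : (∑ i, C i * x * D i) * h
      = ∑ i, ∑ j, τ (C j * D i * h) • (C i * x * D j) := by
    rw [Finset.sum_mul]
    refine Finset.sum_congr rfl fun i _ => ?_
    rw [mul_assoc (C i * x) (D i) h]
    conv_lhs => rw [← rep2 (D i * h)]
    rw [Finset.mul_sum]
    refine Finset.sum_congr rfl fun j _ => ?_
    rw [mul_smul_comm, ← mul_assoc]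
  have rhs_eq : h * (∑ i, C i * x * D i)
      = ∑ j, ∑ i, τ (h * (C j * D i)) • (C i * x * D j) := by
    rw [Finset.mul_sum]
    refine Finset.sum_congr rfl fun j _ => ?_
    rw [← mul_assoc, ← mul_assoc]
    conv_lhs => rw [rep1 (h * C j)]
    rw [Finset.sum_mul, Finset.sum_mul]
    refine Finset.sum_congr rfl fun i _ => ?_
    rw [smul_mul_assoc, smul_mul_assoc, mul_assoc]
  rw [lhs_eq, rhs_eq, Finset.sum_comm]
  refine Finset.sum_congr rfl fun j _ => Finset.sum_congr rfl fun i _ => ?_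
  rw [htr h (C j * D i)]
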